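/- Let 𝒥 be a set of n jobs with processing times p(J) and due dates d(J), let P = Σ_{J∈𝒥} p(J), and let 0 ≤ ℓ < P with d(J) ≤ P for every J ∈ 𝒥. Add a new job J* with p(J*) = P and d(J*) = 2P − ℓ, and suppose there exists a schedule of 𝒥 with maximum tardiness at most ℓ. Then: (a) every schedule of 𝒥 ∪ {J*} has maximum tardiness at least ℓ, and the minimum is exactly ℓ, attained only by schedules that place J* last; (b) for any k, the instance 𝒥 ∪ {J*} admits a schedule that simultaneously has maximum tardiness ℓ (the minimum) and at most k+1 tardy jobs if and only if 𝒥 admits a schedule with maximum tardiness at most ℓ and at most k tardy jobs. -/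

import Mathlib

/-- The completion time of job `J` in the schedule `σ`. -/
def completionTime {N : ℕ} (p : Fin N → ℕ) (σ : Equiv.Perm (Fin N)) (J : Fin N) : ℕ :=
  ∑ k ∈ Finset.univ.filter (fun k' => k' ≤ σ.symm J), p (σ k)


def extPerm {n : ℕ} (σ : Equiv.Perm (Fin n)) : Equiv.Perm (Fin (n+1)) :=
  finSuccEquivLast.symm.permCongr σ.optionCongr

lemma extPerm_castSucc {n : ℕ} (σ : Equiv.Perm (Fin n)) (i : Fin n) :
    extPerm σ i.castSucc = (σ i).castSucc := by
  simp [extPerm, Equiv.permCongr_apply]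

lemma extPerm_last {n : ℕ} (σ : Equiv.Perm (Fin n)) :
    extPerm σ (Fin.last n) = Fin.last n := by
  simp [extPerm, Equiv.permCongr_apply]

def resPerm {n : ℕ} (σ : Equiv.Perm (Fin (n+1))) (h : σ (Fin.last n) = Fin.last n) :
    Equiv.Perm (Fin n) where
  toFun i := Fin.castPred (σ i.castSucc) (by
    intro he
    exact (Fin.castSucc_lt_last i).ne (σ.injective (he.trans h.symm)))
  invFun i := Fin.castPred (σ.symm i.castSucc) (by
    intro he
    have h2 : i.castSucc = Fin.last n := by
      have h3 := congrArg σ he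
      rwa [Equiv.apply_symm_apply, h] at h3
    exact (Fin.castSucc_lt_last i).ne h2)
  left_inv i := by simp
  right_inv i := by simp

lemma resPerm_castSucc {n : ℕ} (σ : Equiv.Perm (Fin (n+1))) (h : σ (Fin.last n) = Fin.last n)
    (i : Fin n) : (resPerm σ h i).castSucc = σ i.castSucc := by
  simp [resPerm]

lemma resPerm_symm_castSucc {n : ℕ} (σ : Equiv.Perm (Fin (n+1))) (h : σ (Fin.last n) = Fin.last n)
    (i : Fin n) : ((resPerm σ h).symm i).castSucc = σ.symm i.castSucc := by
  rw [Equiv.eq_symm_apply, ← resPerm_castSucc σ h, Equiv.apply_symm_apply]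

lemma resPerm_ext {n : ℕ} (σ : Equiv.Perm (Fin n)) :
    resPerm (extPerm σ) (extPerm_last σ) = σ := by
  apply Equiv.ext
  intro i
  apply Fin.castSucc_injective
  have := resPerm_castSucc (extPerm σ) (extPerm_last σ) i
  rw [extPerm_castSucc] at this
  exact this

lemma completionTime_eq_sum_ite {N : ℕ} (p : Fin N → ℕ) (σ : Equiv.Perm (Fin N)) (J : Fin N) :
    completionTime p σ J = ∑ k, if k ≤ σ.symm J then p (σ k) else 0 := by
  rw [completionTime, Finset.sum_filter]

lemma completionTime_lastpos {n : ℕ} (q : Fin (n+1) → ℕ) (σ : Equiv.Perm (Fin (n+1))) :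
    completionTime q σ (σ (Fin.last n)) = ∑ J, q J := by
  rw [completionTime, Equiv.symm_apply_apply]
  rw [show Finset.univ.filter (fun k' : Fin (n+1) => k' ≤ Fin.last n) = Finset.univ by
    simp [Fin.le_last]]
  exact Equiv.sum_comp σ q

lemma completionTime_castSucc {n : ℕ} (p : Fin n → ℕ) (P : ℕ)
    (σ : Equiv.Perm (Fin (n+1))) (h : σ (Fin.last n) = Fin.last n) (J : Fin n) :
    completionTime (Fin.snoc p P) σ J.castSucc = completionTime p (resPerm σ h) J := by
  have hsymm : σ.symm J.castSucc = ((resPerm σ h).symm J).castSucc :=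
    (resPerm_symm_castSucc σ h J).symm
  rw [completionTime_eq_sum_ite, completionTime_eq_sum_ite, hsymm, Fin.sum_univ_castSucc]
  have hlast : ¬ (Fin.last n ≤ ((resPerm σ h).symm J).castSucc) :=
    not_le.mpr (Fin.castSucc_lt_last _)
  rw [if_neg hlast, add_zero]
  apply Finset.sum_congr rfl
  intro k _
  simp only [Fin.castSucc_le_castSucc_iff, ← resPerm_castSucc σ h, Fin.snoc_castSucc]

lemma ntardy_split {n : ℕ} (p d : Fin n → ℕ) (P D : ℕ)
    (σ : Equiv.Perm (Fin (n+1))) (h : σ (Fin.last n) = Fin.last n) :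
    (Finset.univ.filter fun J : Fin (n+1) => (Fin.snoc d D : Fin (n+1) → ℕ) J < completionTime (Fin.snoc p P) σ J).card
      = (Finset.univ.filter fun J : Fin n => d J < completionTime p (resPerm σ h) J).card
        + (if D < completionTime (Fin.snoc p P) σ (Fin.last n) then 1 else 0) := by
  rw [Finset.card_filter, Finset.card_filter, Fin.sum_univ_castSucc]
  congr 1
  · apply Finset.sum_congr rfl
    intro k _
    rw [Fin.snoc_castSucc, completionTime_castSucc p P σ h]
  · rw [Fin.snoc_last]

lemma snoc_sum {n : ℕ} (p : Fin n → ℕ) (P : ℕ) :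
    ∑ J, Fin.snoc p P J = (∑ J, p J) + P := by
  rw [Fin.sum_univ_castSucc]
  simp

/-- The reduction from `1|T_max ≤ ℓ, ΣU_j ≤ k|` to `1||Lex(T_max, ΣU_j)`:
adding a job `J*` with `p(J*) = P` and `d(J*) = 2P − ℓ` (where `P = Σ p`,
`ℓ < P`, `d(J) ≤ P` for all `J`, and some schedule of `𝒥` has maximum tardiness
at most `ℓ`) yields an instance whose minimum maximum tardiness is exactly `ℓ`,
attained only with `J*` last, and which admits a schedule with maximum tardiness
`ℓ` and at most `k+1` tardy jobs iff `𝒥` admits a schedule with maximum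
tardiness at most `ℓ` and at most `k` tardy jobs. -/
theorem stmt8 (n : ℕ) (p d : Fin n → ℕ) (ℓ P : ℕ)
    (hP : P = ∑ J, p J) (hℓ : ℓ < P) (hd : ∀ J, d J ≤ P)
    (hex : ∃ σ : Equiv.Perm (Fin n),
      Finset.univ.sup (fun J => completionTime p σ J - d J) ≤ ℓ) :
    let p' : Fin (n+1) → ℕ := Fin.snoc p P
    let d' : Fin (n+1) → ℕ := Fin.snoc d (2*P - ℓ)
    let tmax' := fun σ : Equiv.Perm (Fin (n+1)) =>
      Finset.univ.sup fun J => completionTime p' σ J - d' J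
    let ntardy' := fun σ : Equiv.Perm (Fin (n+1)) =>
      (Finset.univ.filter fun J => d' J < completionTime p' σ J).card
    let ntardy := fun σ : Equiv.Perm (Fin n) =>
      (Finset.univ.filter fun J => d J < completionTime p σ J).card
    (∀ σ, ℓ ≤ tmax' σ) ∧
    (∃ σ, tmax' σ = ℓ) ∧
    (∀ σ, tmax' σ = ℓ → σ (Fin.last n) = Fin.last n) ∧
    (∀ k : ℕ,
      (∃ σ, tmax' σ = ℓ ∧ ntardy' σ ≤ k + 1) ↔
      (∃ σ : Equiv.Perm (Fin n),
        Finset.univ.sup (fun J => completionTime p σ J - d J) ≤ ℓ ∧ ntardy σ ≤ k)) := by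
  intro p' d' tmax' ntardy' ntardy
  have hp'sum : ∑ J, p' J = 2 * P := by
    have : ∑ J, p' J = (∑ J, p J) + P := snoc_sum p P
    rw [this, ← hP]; ring
  have hlastC : ∀ σ : Equiv.Perm (Fin (n+1)), σ (Fin.last n) = Fin.last n →
      completionTime p' σ (Fin.last n) = 2 * P := by
    intro σ h
    have h2 := completionTime_lastpos p' σ
    rw [h] at h2
    rw [h2, hp'sum]
  have hd'last : d' (Fin.last n) = 2*P - ℓ := Fin.snoc_last _ _
  have hd'cast : ∀ J : Fin n, d' J.castSucc = d J := fun J => Fin.snoc_castSucc _ _ _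
  have hbig : ∀ σ : Equiv.Perm (Fin (n+1)), σ (Fin.last n) ≠ Fin.last n → P ≤ tmax' σ := by
    intro σ h
    have hCJ : completionTime p' σ (σ (Fin.last n)) = 2 * P := by
      rw [completionTime_lastpos, hp'sum]
    have hdJ : d' (σ (Fin.last n)) ≤ P := by
      obtain ⟨j, hj⟩ := Fin.exists_castSucc_eq.mpr h
      rw [← hj, hd'cast]; exact hd j
    have h3 : P ≤ completionTime p' σ (σ (Fin.last n)) - d' (σ (Fin.last n)) := by omega
    exact h3.trans (Finset.le_sup (f := fun J => completionTime p' σ J - d' J) (Finset.mem_univ _))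
  have hA : ∀ σ, ℓ ≤ tmax' σ := by
    intro σ
    by_cases h : σ (Fin.last n) = Fin.last n
    · have h2 : completionTime p' σ (Fin.last n) - d' (Fin.last n) = ℓ := by
        rw [hlastC σ h, hd'last]; omega
      calc ℓ = _ := h2.symm
        _ ≤ tmax' σ := Finset.le_sup (f := fun J => completionTime p' σ J - d' J) (Finset.mem_univ _)
    · exact le_of_lt (hℓ.trans_le (hbig σ h))
  have hC : ∀ σ, tmax' σ = ℓ → σ (Fin.last n) = Fin.last n := by
    intro σ he
    by_contra h
    have := hbig σ h
    omega
  have hchar : ∀ (σ : Equiv.Perm (Fin (n+1))) (h : σ (Fin.last n) = Fin.last n),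
      tmax' σ = ℓ ↔ Finset.univ.sup (fun J => completionTime p (resPerm σ h) J - d J) ≤ ℓ := by
    intro σ h
    constructor
    · intro he
      apply Finset.sup_le
      intro J _
      have hc : completionTime p' σ J.castSucc = completionTime p (resPerm σ h) J :=
        completionTime_castSucc p P σ h J
      rw [← hc, ← hd'cast J]
      calc _ ≤ tmax' σ := Finset.le_sup (f := fun J => completionTime p' σ J - d' J) (Finset.mem_univ J.castSucc)
        _ = ℓ := he
    · intro hs
      refine le_antisymm ?_ (hA σ)
      apply Finset.sup_le
      intro J _
      cases J using Fin.lastCases with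
      | last => rw [hlastC σ h, hd'last]; omega
      | cast j =>
        have hc : completionTime p' σ j.castSucc = completionTime p (resPerm σ h) j :=
          completionTime_castSucc p P σ h j
        rw [hc, hd'cast j]
        exact le_trans (Finset.le_sup (f := fun J => completionTime p (resPerm σ h) J - d J) (Finset.mem_univ j)) hs
  refine ⟨hA, ?_, hC, ?_⟩
  · obtain ⟨σ₀, hσ₀⟩ := hex
    refine ⟨extPerm σ₀, (hchar (extPerm σ₀) (extPerm_last σ₀)).mpr ?_⟩
    rw [resPerm_ext]; exact hσ₀
  · intro k
    constructor
    · rintro ⟨σ, ht, hc⟩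
      have h := hC σ ht
      refine ⟨resPerm σ h, (hchar σ h).mp ht, ?_⟩
      have hsplit : ntardy' σ = ntardy (resPerm σ h)
          + (if 2*P - ℓ < completionTime p' σ (Fin.last n) then 1 else 0) :=
        ntardy_split p d P (2*P - ℓ) σ h
      rw [hlastC σ h] at hsplit
      by_cases hl : ℓ = 0
      · rw [if_neg (by omega)] at hsplit
        have hs := (hchar σ h).mp ht
        have hz : ntardy (resPerm σ h) = 0 := by
          show (Finset.univ.filter fun J => d J < completionTime p (resPerm σ h) J).card = 0
          rw [Finset.card_eq_zero, Finset.filter_eq_empty_iff]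
          intro J _
          have h9 : completionTime p (resPerm σ h) J - d J ≤ ℓ :=
            le_trans (Finset.le_sup (f := fun J => completionTime p (resPerm σ h) J - d J) (Finset.mem_univ J)) hs
          omega
        omega
      · rw [if_pos (by omega)] at hsplit
        omega
    · rintro ⟨σ, hsup, hcnt⟩
      refine ⟨extPerm σ, (hchar (extPerm σ) (extPerm_last σ)).mpr (by rw [resPerm_ext]; exact hsup), ?_⟩
      have hsplit : ntardy' (extPerm σ) = ntardy (resPerm (extPerm σ) (extPerm_last σ))
          + (if 2*P - ℓ < completionTime p' (extPerm σ) (Fin.last n) then 1 else 0) :=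
        ntardy_split p d P (2*P - ℓ) (extPerm σ) (extPerm_last σ)
      rw [resPerm_ext] at hsplit
      have hite : (if 2*P - ℓ < completionTime p' (extPerm σ) (Fin.last n) then 1 else 0) ≤ 1 := by
        split <;> omega
      omega
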